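/- arXiv:1204.2674 — 2 statements merged into one kernel-verified Lean document; each statement's English description precedes it below -/
import Mathlib

section
/- In the free unital associative ring ℤ⟨X⟩, for all elements a₁,...,a₅, the element [a₁,a₂,a₃][a₄,a₅] + [a₁,a₄,a₃][a₂,a₅] lies in the ideal T⁽⁴⁾. -/
noncomputable section

/-- `ℤ⟨X⟩`, the free unital associative ring on a countable set `X = {x₀, x₁, …}`. -/
abbrev R : Type := FreeAlgebra ℤ ℕ

/-- The commutator `[a,b] = ab - ba`. -/
def br (a b : R) : R := a * b - b * a

/-- `T⁽⁴⁾`: the two-sided ideal generated by all left-normed commutators of length 4. -/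
def T4 : TwoSidedIdeal R := TwoSidedIdeal.span {y | ∃ a b c d : R, y = br (br (br a b) c) d}

lemma memC (a b c d : R) : br (br (br a b) c) d ∈ T4 :=
  TwoSidedIdeal.subset_span ⟨a, b, c, d, rfl⟩

lemma memL (x a b c d : R) : x * br (br (br a b) c) d ∈ T4 :=
  T4.mul_mem_left _ _ (memC a b c d)

lemma memR (x a b c d : R) : br (br (br a b) c) d * x ∈ T4 :=
  T4.mul_mem_right _ _ (memC a b c d)

set_option maxHeartbeats 1000000 in
theorem stmt1 (a₁ a₂ a₃ a₄ a₅ : R) :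
    br (br a₁ a₂) a₃ * br a₄ a₅ + br (br a₁ a₄) a₃ * br a₂ a₅ ∈ T4 := by
  have key : br (br a₁ a₂) a₃ * br a₄ a₅ + br (br a₁ a₄) a₃ * br a₂ a₅ =
      a₁ * br (br (br a₂ a₃) a₄) a₅
      + -(a₁ * br (br (br a₂ a₃) a₅) a₄)
      + a₁ * br (br (br a₂ a₅) a₃) a₄
      + -(a₁ * br (br (br a₂ a₅) a₄) a₃)
      + -(br (br (br a₁ a₄) a₅) a₃ * a₂)
      + -(a₂ * br (br (br a₁ a₅) a₃) a₄)
      + br (br (br a₁ a₅) a₄) a₃ * a₂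
      + -(br (br (br a₁ a₂) a₄) a₅ * a₃)
      + br (br (br a₁ a₂) a₅) a₄ * a₃
      + -(br (br (br a₁ a₄) a₂) a₅ * a₃)
      + br (br (br a₁ a₄) a₅) a₂ * a₃
      + a₃ * br (br (br a₁ a₅) a₄) a₂
      + -(br (br (br a₁ a₅) a₄) a₂ * a₃)
      + -(br (br (br a₁ a₂) a₅) a₃ * a₄)
      + br (br (br a₁ a₅) a₂) a₃ * a₄
      + -(br (br (br a₁ a₅) a₃) a₂ * a₄)
      + br (br (br (a₁ * a₂) a₄) a₅) a₃
      + br (br (br (a₁ * a₃) a₂) a₄) a₅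
      + -(br (br (br (a₁ * a₃) a₂) a₅) a₄)
      + br (br (br (a₁ * a₃) a₄) a₂) a₅
      + -(br (br (br (a₁ * a₃) a₄) a₅) a₂)
      + br (br (br (a₁ * a₄) a₂) a₅) a₃
      + br (br (br (a₂ * a₄) a₃) a₁) a₅
      + -(br (br (br (a₂ * a₄) a₃) a₅) a₁) := by
    simp only [br, mul_sub, sub_mul, mul_add, add_mul, mul_assoc]
    abel1
  rw [key]
  exact add_mem (add_mem (add_mem (add_mem (add_mem (add_mem (add_mem (add_mem (add_mem (add_mem (add_mem (add_mem (add_mem (add_mem (add_mem (add_mem (add_mem (add_mem (add_mem (add_mem (add_mem (add_mem (add_mem (memL _ _ _ _ _) (neg_mem (memL _ _ _ _ _))) (memL _ _ _ _ _)) (neg_mem (memL _ _ _ _ _))) (neg_mem (memR _ _ _ _ _))) (neg_mem (memL _ _ _ _ _))) (memR _ _ _ _ _)) (neg_mem (memR _ _ _ _ _))) (memR _ _ _ _ _)) (neg_mem (memR _ _ _ _ _))) (memR _ _ _ _ _)) (memL _ _ _ _ _)) (neg_mem (memR _ _ _ _ _))) (neg_mem (memR _ _ _ _ _))) (memR _ _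 _ _ _)) (neg_mem (memR _ _ _ _ _))) (memC _ _ _ _)) (memC _ _ _ _)) (neg_mem (memC _ _ _ _))) (memC _ _ _ _)) (neg_mem (memC _ _ _ _))) (memC _ _ _ _)) (memC _ _ _ _)) (neg_mem (memC _ _ _ _))
end
end

section
/- With H and P as above, the homomorphism μ: H → ℤ defined on generators by μ(h_{i₁i₂i₃i₄i₅}) = sgn(σ), where σ is the permutation sending (1,2,3,4,5) to (i₁,...,i₅), satisfies μ(P) = 3ℤ. -/
noncomputable section

/-- `H`: the free abelian group on generators `h_{i₁i₂i₃i₄i₅}` indexed by permutations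
of `{1,…,5}` (here `Equiv.Perm (Fin 5)`, where `σ k = i_{k+1}`). -/
abbrev H : Type := Equiv.Perm (Fin 5) →₀ ℤ

/-- The generator `h_{i₁i₂i₃i₄i₅}` corresponding to a permutation. -/
def h (σ : Equiv.Perm (Fin 5)) : H := Finsupp.single σ 1

/-- The 3-cycle `(0 1 2)` on positions, used to express `h_{i₂i₃i₁i₄i₅}` as `h (σ * c)`. -/
def c : Equiv.Perm (Fin 5) := Equiv.swap 0 1 * Equiv.swap 1 2

/-- `P`: the subgroup of `H` generated by all `h_{i₁i₂i₃i₄i₅} + h_{i₂i₁i₃i₄i₅}`,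
`h_{i₁i₂i₃i₄i₅} + h_{i₁i₂i₃i₅i₄}`, `h_{i₁i₂i₃i₄i₅} + h_{i₂i₃i₁i₄i₅} + h_{i₃i₁i₂i₄i₅}`,
`h_{i₁i₂i₃i₄i₅} + h_{i₁i₂i₄i₃i₅}` and `h_{i₁i₂i₃i₄i₅} + h_{i₁i₄i₃i₂i₅}`. -/
def P : AddSubgroup H := AddSubgroup.closure
  ({y | ∃ σ, y = h σ + h (σ * Equiv.swap 0 1)} ∪
   {y | ∃ σ, y = h σ + h (σ * Equiv.swap 3 4)} ∪
   {y | ∃ σ, y = h σ + h (σ * c) + h (σ * c * c)} ∪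
   {y | ∃ σ, y = h σ + h (σ * Equiv.swap 2 3)} ∪
   {y | ∃ σ, y = h σ + h (σ * Equiv.swap 1 3)})


/-- The sign homomorphism `μ : H → ℤ`, `μ(h_σ) = sgn σ`. -/
def μ : H →+ ℤ := Finsupp.liftAddHom fun σ => zmultiplesHom ℤ (Equiv.Perm.sign σ : ℤ)


lemma mu_h (s : Equiv.Perm (Fin 5)) : μ (h s) = (Equiv.Perm.sign s : ℤ) := by
  simp [μ, h]

lemma sign_c : Equiv.Perm.sign c = 1 := by
  simp [c, Equiv.Perm.sign_swap (by decide : (0:Fin 5) ≠ 1),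
    Equiv.Perm.sign_swap (by decide : (1:Fin 5) ≠ 2)]

lemma sign_cases (s : Equiv.Perm (Fin 5)) :
    (Equiv.Perm.sign s : ℤ) = 1 ∨ (Equiv.Perm.sign s : ℤ) = -1 :=
  Int.isUnit_iff.mp (Equiv.Perm.sign s).isUnit

/-- `μ(P) = 3ℤ`. -/
theorem stmt13 : AddSubgroup.map μ P = AddSubgroup.closure {(3 : ℤ)} := by
  rw [P, AddMonoidHom.map_closure]
  have h3 : (3:ℤ) ∈ AddSubgroup.closure {(3:ℤ)} := AddSubgroup.subset_closure rfl
  apply le_antisymm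
  · rw [AddSubgroup.closure_le]
    rintro x ⟨y, hy, rfl⟩
    simp only [Set.mem_union, Set.mem_setOf_eq] at hy
    rcases hy with ((((⟨σ, rfl⟩|⟨σ, rfl⟩)|⟨σ, rfl⟩)|⟨σ, rfl⟩)|⟨σ, rfl⟩)
    · simp [map_add, mu_h, Equiv.Perm.sign_swap (by decide : (0:Fin 5) ≠ 1)]
    · simp [map_add, mu_h, Equiv.Perm.sign_swap (by decide : (3:Fin 5) ≠ 4)]
    · have : μ (h σ + h (σ * c) + h (σ * c * c)) = 3 * (Equiv.Perm.sign σ : ℤ) := by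
        simp [map_add, mu_h, sign_c]
        ring
      rw [this]
      rcases sign_cases σ with hs | hs <;> rw [hs]
      · simp only [mul_one]; exact h3
      · simp only [mul_neg_one]; exact neg_mem h3
    · simp [map_add, mu_h, Equiv.Perm.sign_swap (by decide : (2:Fin 5) ≠ 3)]
    · simp [map_add, mu_h, Equiv.Perm.sign_swap (by decide : (1:Fin 5) ≠ 3)]
  · rw [AddSubgroup.closure_le]
    rintro x rfl
    apply AddSubgroup.subset_closure
    refine ⟨h 1 + h (1 * c) + h (1 * c * c), Or.inl (Or.inl (Or.inr ⟨1, rfl⟩)), ?_⟩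
    simp [map_add, mu_h, sign_c]
end
end
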